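/- Suppose the kernel functions K_1,…,K_n are singular and J is an arbitrary n-field function. Then for every y ∈ S̄ and every j ∈ {0,1,…,n} with m_j(y) ≠ -∞ there exist δ > 0 and a nonempty closed interval W ⊆ [0,1] such that for every x ∈ S̄ with ‖x - y‖ ≤ δ: (i) W ⊆ I_j(x) and |t - x_i| ≥ δ for all t ∈ W and all i = 1,…,n; (ii) m_j(x) = sup_{t ∈ W} F(x,t). -/

import Mathlib

open Set Filter
open scoped BigOperators Topology

noncomputable section

/-- The real part of an extended-real-valued function. -/
def toR (K : ℝ → EReal) : ℝ → ℝ := fun t => (K t).toReal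

/-- A *kernel function*: finite-valued, continuous and concave on `[-1,0)` and `(0,1]`,
never `+∞`, and with coinciding one-sided limits at `0` (given by the value `K 0`). -/
structure IsKernel (K : ℝ → EReal) : Prop where
  ne_top : ∀ t, K t ≠ ⊤
  finite_left : ∀ t ∈ Ico (-1:ℝ) 0, K t ≠ ⊥
  finite_right : ∀ t ∈ Ioc (0:ℝ) 1, K t ≠ ⊥
  cont_left : ContinuousOn (toR K) (Ico (-1:ℝ) 0)
  cont_right : ContinuousOn (toR K) (Ioc (0:ℝ) 1)
  concave_left : ConcaveOn ℝ (Ico (-1:ℝ) 0) (toR K)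
  concave_right : ConcaveOn ℝ (Ioc (0:ℝ) 1) (toR K)
  tendsto_left : Tendsto K (nhdsWithin 0 (Iio 0)) (nhds (K 0))
  tendsto_right : Tendsto K (nhdsWithin 0 (Ioi 0)) (nhds (K 0))

/-- Left one-sided derivative. -/
def Dm (f : ℝ → ℝ) (t : ℝ) : ℝ := derivWithin f (Iio t) t

/-- Right one-sided derivative. -/
def Dp (f : ℝ → ℝ) (t : ℝ) : ℝ := derivWithin f (Ioi t) t

/-- Condition (PM_c): periodized `c`-monotonicity. -/
def PMcond (K : ℝ → EReal) (c : ℝ) : Prop :=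
  ∀ t ∈ Ioo (0:ℝ) 1, c ≤ Dm (toR K) t - Dm (toR K) (t - 1)

/-- An *n-field function*: bounded above, never `+∞`, finite at more than `n` points of
`[0,1]`, where the endpoints count with weight `1/2`. -/
structure IsNField (n : ℕ) (J : ℝ → EReal) : Prop where
  ne_top : ∀ t, J t ≠ ⊤
  bdd : ∃ M : ℝ, ∀ t ∈ Icc (0:ℝ) 1, J t ≤ (M : EReal)
  count : (∃ T : Finset ℝ, ↑T ⊆ {t | t ∈ Ioo (0:ℝ) 1 ∧ J t ≠ ⊥} ∧ n + 1 ≤ T.card) ∨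
    ((∃ T : Finset ℝ, ↑T ⊆ {t | t ∈ Ioo (0:ℝ) 1 ∧ J t ≠ ⊥} ∧ n ≤ T.card) ∧
      (J 0 ≠ ⊥ ∨ J 1 ≠ ⊥))

/-- The open simplex `S`. -/
def openSimplex (n : ℕ) : Set (Fin n → ℝ) :=
  {y | StrictMono y ∧ ∀ i, y i ∈ Ioo (0:ℝ) 1}

/-- The closed simplex `S̄`. -/
def closedSimplex (n : ℕ) : Set (Fin n → ℝ) :=
  {y | Monotone y ∧ ∀ i, y i ∈ Icc (0:ℝ) 1}

/-- The left endpoint `y_j` of `I_j(y)`, with the convention `y_0 = 0`. -/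
def nodeLo {n : ℕ} (y : Fin n → ℝ) (j : ℕ) : ℝ :=
  if h : 0 < j ∧ j ≤ n then y ⟨j - 1, by omega⟩ else 0

/-- The right endpoint `y_{j+1}` of `I_j(y)`, with the convention `y_{n+1} = 1`. -/
def nodeHi {n : ℕ} (y : Fin n → ℝ) (j : ℕ) : ℝ :=
  if h : j < n then y ⟨j, h⟩ else 1

/-- The interval `I_j(y) = [y_j, y_{j+1}]`. -/
def Ij {n : ℕ} (y : Fin n → ℝ) (j : ℕ) : Set ℝ := Icc (nodeLo y j) (nodeHi y j)

/-- The sum of translates function `F(y,t) = J(t) + ∑ K_j(t - y_j)`. -/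
def SOT {n : ℕ} (K : Fin n → ℝ → EReal) (J : ℝ → EReal) (y : Fin n → ℝ) (t : ℝ) : EReal :=
  J t + ∑ i, K i (t - y i)

/-- The interval maximum `m_j(y) = sup_{t ∈ I_j(y)} F(y,t)`. -/
def mj {n : ℕ} (K : Fin n → ℝ → EReal) (J : ℝ → EReal) (y : Fin n → ℝ) (j : ℕ) : EReal :=
  ⨆ t ∈ Ij y j, SOT K J y t

/-- The regularity set `Y`. -/
def regSet {n : ℕ} (K : Fin n → ℝ → EReal) (J : ℝ → EReal) : Set (Fin n → ℝ) :=
  {y ∈ openSimplex n | ∀ j ≤ n, mj K J y j ≠ ⊥}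

/-- The difference function `Φ(y) = (m_1 - m_0, …, m_n - m_{n-1})`. -/
def PhiFun {n : ℕ} (K : Fin n → ℝ → EReal) (J : ℝ → EReal) (y : Fin n → ℝ) : Fin n → ℝ :=
  fun i => (mj K J y ((i : ℕ) + 1)).toReal - (mj K J y (i : ℕ)).toReal

/-- A map between (pseudo)metric spaces is *locally bi-Lipschitz* if every point has a
neighborhood on which the map is a bi-Lipschitz homeomorphism onto its image. -/
def LocallyBiLipschitz {α β : Type*} [PseudoMetricSpace α] [PseudoMetricSpace β]
    (f : α → β) : Prop :=
  ∀ x : α, ∃ U ∈ 𝓝 x, ∃ c C : ℝ, 0 < c ∧ ∀ a ∈ U, ∀ b ∈ U,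
    c * dist a b ≤ dist (f a) (f b) ∧ dist (f a) (f b) ≤ C * dist a b

/-- The relative interior of `[a,b] ⊆ [0,1]` in the space `[0,1]`. -/
def relIntIcc (a b : ℝ) : Set ℝ :=
  (if a = 0 then Ici a else Ioi a) ∩ (if b = 1 then Iic b else Iio b)

/-- Condition `(∞₊)`. -/
def CondInfPlus (J : ℝ → EReal) : Prop :=
  J 0 = ⊥ ∧ Tendsto J (nhdsWithin 0 (Ioi 0)) (nhds ⊥)

/-- Condition `(∞₋)`. -/
def CondInfMinus (J : ℝ → EReal) : Prop :=
  J 1 = ⊥ ∧ Tendsto J (nhdsWithin 1 (Iio 1)) (nhds ⊥)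

/-- Fenton's cusp condition `(∞'₊)`. -/
def CuspPlus (J : ℝ → EReal) : Prop :=
  ∀ M : ℝ, ∃ δ > (0:ℝ), ∀ s t : ℝ, 0 ≤ s → s < t → t ≤ δ →
    J s ≠ ⊥ → J t ≠ ⊥ → M ≤ ((J t).toReal - (J s).toReal) / (t - s)

/-- Fenton's cusp condition `(∞'₋)`. -/
def CuspMinus (J : ℝ → EReal) : Prop :=
  ∀ M : ℝ, ∃ δ > (0:ℝ), ∀ t s : ℝ, 1 - δ ≤ t → t < s → s ≤ 1 →
    J s ≠ ⊥ → J t ≠ ⊥ → ((J t).toReal - (J s).toReal) / (t - s) ≤ -M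

/-- `L : [0,1] → [0,∞)` is log-concave:
`L(λs + (1-λ)t) ≥ L(s)^λ L(t)^{1-λ}`. -/
def LogConcaveOn01 (L : ℝ → ℝ) : Prop :=
  ∀ s ∈ Icc (0:ℝ) 1, ∀ t ∈ Icc (0:ℝ) 1, ∀ l ∈ Icc (0:ℝ) 1,
    L s ^ l * L t ^ (1 - l) ≤ L (l * s + (1 - l) * t)



/-! ### Auxiliary lemmas -/

lemma ereal_coe_sum {α : Type*} (s : Finset α) (f : α → ℝ) :
    ((∑ i ∈ s, f i : ℝ) : EReal) = ∑ i ∈ s, (f i : EReal) :=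
  map_sum (⟨⟨Real.toEReal, by norm_num⟩, fun a b => EReal.coe_add a b⟩ : ℝ →+ EReal) f s

lemma kernel_ne_bot {K : ℝ → EReal} (hK : IsKernel K) {s : ℝ}
    (hs : s ∈ Icc (-1:ℝ) 1) (h0 : s ≠ 0) : K s ≠ ⊥ := by
  rcases lt_or_gt_of_ne h0 with h | h
  · exact hK.finite_left s ⟨hs.1, h⟩
  · exact hK.finite_right s ⟨h, hs.2⟩

lemma kernel_coe {K : ℝ → EReal} (hK : IsKernel K) {s : ℝ}
    (hs : s ∈ Icc (-1:ℝ) 1) (h0 : s ≠ 0) : K s = ((toR K s : ℝ) : EReal) :=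
  (EReal.coe_toReal (hK.ne_top s) (kernel_ne_bot hK hs h0)).symm

/-- Smallness of a singular kernel near 0. -/
lemma kernel_small {K : ℝ → EReal} (hK : IsKernel K) (hs : K 0 = ⊥) (M : ℝ) :
    ∃ ε > (0:ℝ), ∀ s : ℝ, |s| ≤ ε → K s ≤ (M : EReal) := by
  have hnb : Iio ((M:EReal)) ∈ nhds (⊥ : EReal) :=
    IsOpen.mem_nhds isOpen_Iio (EReal.bot_lt_coe M)
  have hl := hK.tendsto_left; have hr := hK.tendsto_right
  rw [hs] at hl hr
  have hl' := hl hnb; have hr' := hr hnb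
  rw [mem_map, Metric.mem_nhdsWithin_iff] at hl' hr'
  obtain ⟨ε1, hε1, h1⟩ := hl'
  obtain ⟨ε2, hε2, h2⟩ := hr'
  refine ⟨min ε1 ε2 / 2, by positivity, fun s hsle => ?_⟩
  rcases lt_trichotomy s 0 with h | h | h
  · have : s ∈ Metric.ball (0:ℝ) ε1 ∩ Iio 0 := by
      constructor
      · simp only [Metric.mem_ball, Real.dist_eq, sub_zero]
        calc |s| ≤ min ε1 ε2 / 2 := hsle
          _ < ε1 := by have := min_le_left ε1 ε2; linarith
      · exact h
    exact le_of_lt (h1 this)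
  · simp [h, hs]
  · have : s ∈ Metric.ball (0:ℝ) ε2 ∩ Ioi 0 := by
      constructor
      · simp only [Metric.mem_ball, Real.dist_eq, sub_zero]
        calc |s| ≤ min ε1 ε2 / 2 := hsle
          _ < ε2 := by have := min_le_right ε1 ε2; linarith
      · exact h
    exact le_of_lt (h2 this)

/-- A singular kernel is bounded above on `[-1,1]`. -/
lemma kernel_bddAbove {K : ℝ → EReal} (hK : IsKernel K) (hs : K 0 = ⊥) :
    ∃ B : ℝ, 0 ≤ B ∧ ∀ s ∈ Icc (-1:ℝ) 1, K s ≤ (B : EReal) := by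
  obtain ⟨ε, hε, hsmall⟩ := kernel_small hK hs 0
  have hεle : min ε 1 > 0 := lt_min hε one_pos
  set e := min ε 1 with he
  have hcpt1 : IsCompact (Icc (-1:ℝ) (-e)) := isCompact_Icc
  have hcpt2 : IsCompact (Icc (e:ℝ) 1) := isCompact_Icc
  have hsub1 : Icc (-1:ℝ) (-e) ⊆ Ico (-1:ℝ) 0 := fun t ht => ⟨ht.1, lt_of_le_of_lt ht.2 (by linarith)⟩
  have hsub2 : Icc (e:ℝ) 1 ⊆ Ioc (0:ℝ) 1 := fun t ht => ⟨lt_of_lt_of_le hεle ht.1, ht.2⟩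
  obtain ⟨B1, hB1⟩ := (hcpt1.bddAbove_image (hK.cont_left.mono hsub1))
  obtain ⟨B2, hB2⟩ := (hcpt2.bddAbove_image (hK.cont_right.mono hsub2))
  refine ⟨max (max B1 B2) 0, le_max_right _ _, fun s hsmem => ?_⟩
  rcases le_or_gt (|s|) e with h | h
  · calc K s ≤ ((0:ℝ):EReal) := hsmall s (le_trans h (min_le_left _ _))
      _ ≤ _ := by exact_mod_cast le_max_right _ _
  · have h0 : s ≠ 0 := by intro h0; rw [h0] at h; simp at h; linarith
    rw [kernel_coe hK hsmem h0]
    rcases lt_or_gt_of_ne h0 with hneg | hpos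
    · have hmem : toR K s ∈ toR K '' Icc (-1:ℝ) (-e) := by
        refine ⟨s, ⟨hsmem.1, ?_⟩, rfl⟩
        rw [abs_of_neg hneg] at h; linarith
      have := hB1 hmem
      exact_mod_cast le_trans this (le_trans (le_max_left B1 B2) (le_max_left _ _))
    · have hmem : toR K s ∈ toR K '' Icc (e:ℝ) 1 := by
        refine ⟨s, ⟨?_, hsmem.2⟩, rfl⟩
        rw [abs_of_pos hpos] at h; linarith
      have := hB2 hmem
      exact_mod_cast le_trans this (le_trans (le_max_right B1 B2) (le_max_left _ _))

/-- Lower bound for a kernel near a nonzero point. -/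
lemma kernel_lsc {K : ℝ → EReal} (hK : IsKernel K) {s0 : ℝ}
    (hs0 : s0 ∈ Icc (-1:ℝ) 1) (h0 : s0 ≠ 0) {ε : ℝ} (hε : 0 < ε) :
    ∃ η > (0:ℝ), ∀ s ∈ Icc (-1:ℝ) 1, |s - s0| ≤ η →
      ((toR K s0 - ε : ℝ) : EReal) ≤ K s := by
  rcases lt_or_gt_of_ne h0 with hneg | hpos
  · have hmem : s0 ∈ Ico (-1:ℝ) 0 := ⟨hs0.1, hneg⟩
    have hc : Tendsto (toR K) (nhdsWithin s0 (Ico (-1:ℝ) 0)) (nhds (toR K s0)) :=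
      hK.cont_left s0 hmem
    have hnb : Ioi (toR K s0 - ε) ∈ nhds (toR K s0) :=
      IsOpen.mem_nhds isOpen_Ioi (mem_Ioi.mpr (by linarith))
    have hp := hc hnb
    rw [mem_map, Metric.mem_nhdsWithin_iff] at hp
    obtain ⟨η1, hη1, hball⟩ := hp
    refine ⟨min (η1/2) (-s0/2), lt_min (by linarith) (by linarith), fun s hsI hsd => ?_⟩
    have h1 : |s - s0| ≤ η1/2 := le_trans hsd (min_le_left _ _)
    have h2 : |s - s0| ≤ -s0/2 := le_trans hsd (min_le_right _ _)
    have habs := abs_le.mp h2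
    have hsneg : s < 0 := by linarith [habs.2]
    have hsmem : s ∈ Metric.ball s0 η1 ∩ Ico (-1:ℝ) 0 := by
      refine ⟨?_, hsI.1, hsneg⟩
      simp only [Metric.mem_ball, Real.dist_eq]
      have := abs_le.mp h1
      rw [abs_lt]
      constructor <;> linarith [this.1, this.2]
    have := hball hsmem
    rw [kernel_coe hK hsI (ne_of_lt hsneg)]
    exact_mod_cast le_of_lt this
  · have hmem : s0 ∈ Ioc (0:ℝ) 1 := ⟨hpos, hs0.2⟩
    have hc : Tendsto (toR K) (nhdsWithin s0 (Ioc (0:ℝ) 1)) (nhds (toR K s0)) :=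
      hK.cont_right s0 hmem
    have hnb : Ioi (toR K s0 - ε) ∈ nhds (toR K s0) :=
      IsOpen.mem_nhds isOpen_Ioi (mem_Ioi.mpr (by linarith))
    have hp := hc hnb
    rw [mem_map, Metric.mem_nhdsWithin_iff] at hp
    obtain ⟨η1, hη1, hball⟩ := hp
    refine ⟨min (η1/2) (s0/2), lt_min (by linarith) (by linarith), fun s hsI hsd => ?_⟩
    have h1 : |s - s0| ≤ η1/2 := le_trans hsd (min_le_left _ _)
    have h2 : |s - s0| ≤ s0/2 := le_trans hsd (min_le_right _ _)
    have habs := abs_le.mp h2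
    have hspos : 0 < s := by linarith [habs.1]
    have hsmem : s ∈ Metric.ball s0 η1 ∩ Ioc (0:ℝ) 1 := by
      refine ⟨?_, hspos, hsI.2⟩
      simp only [Metric.mem_ball, Real.dist_eq]
      have := abs_le.mp h1
      rw [abs_lt]
      constructor <;> linarith [this.1, this.2]
    have := hball hsmem
    rw [kernel_coe hK hsI (ne_of_gt hspos)]
    exact_mod_cast le_of_lt this

lemma nodeLo_pos' {n : ℕ} (y : Fin n → ℝ) {j : ℕ} (h1 : 0 < j) (h2 : j ≤ n) :
    nodeLo y j = y ⟨j-1, by omega⟩ := dif_pos ⟨h1, h2⟩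

lemma nodeLo_zero' {n : ℕ} (y : Fin n → ℝ) : nodeLo y 0 = 0 := dif_neg (by omega)

lemma nodeHi_lt' {n : ℕ} (y : Fin n → ℝ) {j : ℕ} (h : j < n) : nodeHi y j = y ⟨j, h⟩ := dif_pos h

lemma nodeHi_n' {n : ℕ} (y : Fin n → ℝ) : nodeHi y n = 1 := dif_neg (by omega)

lemma Ij_subset_unit {n : ℕ} {y : Fin n → ℝ} (hy : y ∈ closedSimplex n) (j : ℕ) :
    Ij y j ⊆ Icc (0:ℝ) 1 := by
  intro t ht
  have h1 : 0 ≤ nodeLo y j := by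
    unfold nodeLo; split
    · exact (hy.2 _).1
    · exact le_refl _
  have h2 : nodeHi y j ≤ 1 := by
    unfold nodeHi; split
    · exact (hy.2 _).2
    · exact le_refl _
  exact ⟨le_trans h1 ht.1, le_trans ht.2 h2⟩

lemma sub_mem_unit {n : ℕ} {x : Fin n → ℝ} (hx : x ∈ closedSimplex n) {t : ℝ}
    (ht : t ∈ Icc (0:ℝ) 1) (i : Fin n) : t - x i ∈ Icc (-1:ℝ) 1 := by
  have h := hx.2 i
  exact ⟨by linarith [h.2, ht.1], by linarith [h.1, ht.2]⟩

/-- (Lemma 3.2 / `lem:preZ`.) For singular kernels and an arbitrary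
`n`-field function, if `m_j(y) ≠ -∞` then there are `δ > 0` and a nonempty closed
interval `W = [a,b] ⊆ [0,1]` such that for all `x ∈ S̄` with `‖x - y‖ ≤ δ`:
(i) `W ⊆ I_j(x)` and `W` has distance at least `δ` to `{x_1,…,x_n}`;
(ii) `m_j(x) = sup_{t ∈ W} F(x,t)`. -/
theorem interval_maximum_localization
    {n : ℕ} (hn : 1 ≤ n) (K : Fin n → ℝ → EReal) (J : ℝ → EReal)
    (hK : ∀ i, IsKernel (K i)) (hsing : ∀ i, K i 0 = ⊥) (hJ : IsNField n J)
    (y : Fin n → ℝ) (hy : y ∈ closedSimplex n)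
    (j : ℕ) (hj : j ≤ n) (hm : mj K J y j ≠ ⊥) :
    ∃ δ > (0:ℝ), ∃ a b : ℝ, a ≤ b ∧ Icc a b ⊆ Icc (0:ℝ) 1 ∧
      ∀ x ∈ closedSimplex n, dist x y ≤ δ →
        (Icc a b ⊆ Ij x j ∧ ∀ t ∈ Icc a b, ∀ i, δ ≤ |t - x i|) ∧
        mj K J x j = ⨆ t ∈ Icc a b, SOT K J x t := by
  classical
  obtain ⟨M, hM⟩ := hJ.bdd
  choose B hB0 hBle using fun i => kernel_bddAbove (hK i) (hsing i)
  set C : ℝ := M + ∑ i, B i with hC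
  -- per-kernel upper bound for SOT
  have hSOT1 : ∀ x ∈ closedSimplex n, ∀ t ∈ Icc (0:ℝ) 1, ∀ i0 : Fin n,
      SOT K J x t ≤ (C : EReal) + K i0 (t - x i0) := by
    intro x hx t ht i0
    have hJt : J t ≤ (M:EReal) := hM t ht
    have hsum : ∑ i, K i (t - x i)
        = K i0 (t - x i0) + ∑ i ∈ Finset.univ.erase i0, K i (t - x i) :=
      (Finset.add_sum_erase _ _ (Finset.mem_univ i0)).symm
    have herase : ∑ i ∈ Finset.univ.erase i0, K i (t - x i) ≤ ((∑ i, B i : ℝ) : EReal) := by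
      calc ∑ i ∈ Finset.univ.erase i0, K i (t - x i)
          ≤ ∑ i ∈ Finset.univ.erase i0, ((B i : ℝ) : EReal) :=
            Finset.sum_le_sum (fun i _ => hBle i _ (sub_mem_unit hx ht i))
        _ = ((∑ i ∈ Finset.univ.erase i0, B i : ℝ) : EReal) := (ereal_coe_sum _ _).symm
        _ ≤ ((∑ i, B i : ℝ) : EReal) := by
            exact_mod_cast Finset.sum_le_sum_of_subset_of_nonneg
              (Finset.subset_univ _) (fun i _ _ => hB0 i)
    calc SOT K J x t = J t + ∑ i, K i (t - x i) := rfl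
      _ = J t + (K i0 (t - x i0) + ∑ i ∈ Finset.univ.erase i0, K i (t - x i)) := by rw [hsum]
      _ ≤ (M:EReal) + (K i0 (t - x i0) + ((∑ i, B i : ℝ) : EReal)) :=
          add_le_add hJt (add_le_add_right herase _)
      _ = ((M:EReal) + ((∑ i, B i : ℝ) : EReal)) + K i0 (t - x i0) := by
          rw [add_comm (K i0 (t - x i0)) _, ← add_assoc]
      _ = (C : EReal) + K i0 (t - x i0) := by rw [← EReal.coe_add, hC]
  -- global upper bound for SOT
  have hSOTC : ∀ x ∈ closedSimplex n, ∀ t ∈ Icc (0:ℝ) 1, SOT K J x t ≤ (C:EReal) + (B ⟨0,hn⟩ : EReal) := by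
    intro x hx t ht
    exact le_trans (hSOT1 x hx t ht ⟨0,hn⟩)
      (add_le_add_right (hBle _ _ (sub_mem_unit hx ht _)) _)
  have hmj_top : mj K J y j ≠ ⊤ := by
    have h1 : mj K J y j ≤ (C:EReal) + (B ⟨0,hn⟩ : EReal) := by
      rw [mj]
      exact iSup₂_le fun t ht => hSOTC y hy t (Ij_subset_unit hy j ht)
    intro h
    rw [h] at h1
    rw [← EReal.coe_add] at h1
    exact (EReal.coe_ne_top _) (top_le_iff.mp h1)
  set m : ℝ := (mj K J y j).toReal with hm_def
  have hmeq : mj K J y j = (m : EReal) := (EReal.coe_toReal hmj_top hm).symm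
  -- smallness radius η
  choose ε hεpos hsmall using fun i => kernel_small (hK i) (hsing i) (m - 2 - C)
  have hne : (Finset.univ : Finset (Fin n)).Nonempty := ⟨⟨0, hn⟩, Finset.mem_univ _⟩
  set η : ℝ := Finset.univ.inf' hne ε with hη_def
  have hηpos : 0 < η := by
    rw [hη_def, Finset.lt_inf'_iff]
    exact fun i _ => hεpos i
  have hηle : ∀ i, η ≤ ε i := fun i => Finset.inf'_le _ (Finset.mem_univ i)
  -- near a node the SOT is small
  have hfar : ∀ x ∈ closedSimplex n, ∀ t ∈ Icc (0:ℝ) 1, ∀ i : Fin n,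
      |t - x i| ≤ η → SOT K J x t ≤ ((m - 2 : ℝ) : EReal) := by
    intro x hx t ht i habs
    calc SOT K J x t ≤ (C:EReal) + K i (t - x i) := hSOT1 x hx t ht i
      _ ≤ (C:EReal) + ((m - 2 - C : ℝ) : EReal) :=
          add_le_add_right (hsmall i _ (le_trans habs (hηle i))) _
      _ = ((m - 2 : ℝ) : EReal) := by rw [← EReal.coe_add]; norm_num
  -- near-maximizer t0
  have hlt : ((m - 1 : ℝ) : EReal) < mj K J y j := by
    rw [hmeq]; exact_mod_cast (by linarith : m - 1 < m)
  obtain ⟨t0, ht0I, ht0⟩ : ∃ t ∈ Ij y j, ((m - 1 : ℝ) : EReal) < SOT K J y t := by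
    have h := hlt
    rw [mj, lt_iSup_iff] at h
    obtain ⟨t, ht⟩ := h
    rw [lt_iSup_iff] at ht
    obtain ⟨htI, h⟩ := ht
    exact ⟨t, htI, h⟩
  have ht0mem : t0 ∈ Icc (0:ℝ) 1 := Ij_subset_unit hy j ht0I
  have ht0far : ∀ i, η < |t0 - y i| := by
    intro i
    by_contra hcon
    push_neg at hcon
    have h1 := hfar y hy t0 ht0mem i hcon
    have h2 : ((m - 1:ℝ):EReal) < ((m - 2:ℝ):EReal) := lt_of_lt_of_le ht0 h1
    have h3 : (m - 1:ℝ) < m - 2 := by exact_mod_cast h2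
    linarith
  have ht0ne : ∀ i, t0 - y i ≠ 0 := by
    intro i h
    have := ht0far i
    rw [h] at this
    simp at this
    linarith
  have hsubi : ∀ i, t0 - y i ∈ Icc (-1:ℝ) 1 := fun i => sub_mem_unit hy ht0mem i
  set g : Fin n → ℝ := fun i => toR (K i) (t0 - y i) with hg_def
  have hKcoe : ∀ i, K i (t0 - y i) = ((g i : ℝ) : EReal) :=
    fun i => kernel_coe (hK i) (hsubi i) (ht0ne i)
  set S : ℝ := ∑ i, g i with hS_def
  have hJt0 : J t0 ≠ ⊥ := by
    intro hbot
    have hb : SOT K J y t0 = ⊥ := by rw [SOT, hbot, EReal.bot_add]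
    rw [hb] at ht0
    exact (not_lt_bot ht0)
  set jr : ℝ := (J t0).toReal with hjr_def
  have hJcoe : J t0 = (jr : EReal) := (EReal.coe_toReal (hJ.ne_top t0) hJt0).symm
  have hSOTy : SOT K J y t0 = ((jr + S : ℝ) : EReal) := by
    rw [SOT, hJcoe]
    have hs : ∑ i, K i (t0 - y i) = ((S : ℝ) : EReal) := by
      rw [hS_def, ereal_coe_sum]
      exact Finset.sum_congr rfl (fun i _ => hKcoe i)
    rw [hs, ← EReal.coe_add]
  have hr0 : m - 1 < jr + S := by
    have h := ht0
    rw [hSOTy] at h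
    exact_mod_cast h
  -- continuity radii
  have hhalf : (0:ℝ) < 1 / (2 * n) := by positivity
  choose κ hκpos hκle using fun i => kernel_lsc (hK i) (hsubi i) (ht0ne i) hhalf
  set δ : ℝ := min (η/4) (Finset.univ.inf' hne κ) with hδ_def
  have hδpos : 0 < δ := by
    rw [hδ_def]
    refine lt_min (by linarith) ?_
    rw [Finset.lt_inf'_iff]
    exact fun i _ => hκpos i
  have hδη : δ ≤ η/4 := min_le_left _ _
  have hδκ : ∀ i, δ ≤ κ i :=
    fun i => le_trans (min_le_right _ _) (Finset.inf'_le _ (Finset.mem_univ i))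
  -- the window
  set a : ℝ := if j = 0 then 0 else nodeLo y j + η/2 with ha_def
  set b : ℝ := if j = n then 1 else nodeHi y j - η/2 with hb_def
  have ha_t0 : a ≤ t0 := by
    by_cases hj0 : j = 0
    · rw [ha_def, if_pos hj0]; exact ht0mem.1
    · rw [ha_def, if_neg hj0]
      have hpos : 0 < j := Nat.pos_of_ne_zero hj0
      have hLo : nodeLo y j = y ⟨j-1, by omega⟩ := nodeLo_pos' y hpos hj
      have h1 : nodeLo y j ≤ t0 := ht0I.1
      have h2 := ht0far ⟨j-1, by omega⟩
      rw [← hLo] at h2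
      rw [abs_of_nonneg (by linarith)] at h2
      linarith
  have ht0_b : t0 ≤ b := by
    by_cases hjn : j = n
    · rw [hb_def, if_pos hjn]; exact ht0mem.2
    · rw [hb_def, if_neg hjn]
      have hjlt : j < n := lt_of_le_of_ne hj hjn
      have hHi : nodeHi y j = y ⟨j, hjlt⟩ := nodeHi_lt' y hjlt
      have h1 : t0 ≤ nodeHi y j := ht0I.2
      have h2 := ht0far ⟨j, hjlt⟩
      rw [← hHi] at h2
      rw [abs_of_nonpos (by linarith), neg_sub] at h2
      linarith
  have ht0ab : t0 ∈ Icc a b := ⟨ha_t0, ht0_b⟩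
  have ha0 : 0 ≤ a := by
    by_cases hj0 : j = 0
    · rw [ha_def, if_pos hj0]
    · rw [ha_def, if_neg hj0]
      have hpos : 0 < j := Nat.pos_of_ne_zero hj0
      have hLo : nodeLo y j = y ⟨j-1, by omega⟩ := nodeLo_pos' y hpos hj
      have := (hy.2 ⟨j-1, by omega⟩).1
      rw [hLo]
      linarith
  have hb1 : b ≤ 1 := by
    by_cases hjn : j = n
    · rw [hb_def, if_pos hjn]
    · rw [hb_def, if_neg hjn]
      have hjlt : j < n := lt_of_le_of_ne hj hjn
      have hHi : nodeHi y j = y ⟨j, hjlt⟩ := nodeHi_lt' y hjlt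
      have := (hy.2 ⟨j, hjlt⟩).2
      rw [hHi]
      linarith
  refine ⟨δ, hδpos, a, b, le_trans ha_t0 ht0_b,
    fun t ht => ⟨le_trans ha0 ht.1, le_trans ht.2 hb1⟩, ?_⟩
  intro x hx hdist
  have hd : ∀ i, |x i - y i| ≤ δ := by
    intro i
    have h := (dist_pi_le_iff (le_of_lt hδpos)).mp hdist i
    rwa [Real.dist_eq] at h
  -- (i) window inside I_j(x)
  have hWsub : Icc a b ⊆ Ij x j := by
    intro t ht
    constructor
    · by_cases hj0 : j = 0
      · rw [hj0, nodeLo_zero']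
        exact le_trans ha0 ht.1
      · have hpos : 0 < j := Nat.pos_of_ne_zero hj0
        rw [nodeLo_pos' x hpos hj]
        have h1 := abs_le.mp (hd ⟨j-1, by omega⟩)
        have h2 : a = y ⟨j-1, by omega⟩ + η/2 := by
          rw [ha_def, if_neg hj0, nodeLo_pos' y hpos hj]
        have h3 := ht.1
        linarith [h1.1, h1.2]
    · by_cases hjn : j = n
      · rw [hjn, nodeHi_n']
        exact le_trans ht.2 hb1
      · have hjlt : j < n := lt_of_le_of_ne hj hjn
        rw [nodeHi_lt' x hjlt]
        have h1 := abs_le.mp (hd ⟨j, hjlt⟩)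
        have h2 : b = y ⟨j, hjlt⟩ - η/2 := by
          rw [hb_def, if_neg hjn, nodeHi_lt' y hjlt]
        have h3 := ht.2
        linarith [h1.1, h1.2]
  -- (i) distance to nodes
  have hWdist : ∀ t ∈ Icc a b, ∀ i, δ ≤ |t - x i| := by
    intro t ht i
    rcases lt_or_ge (i:ℕ) j with hij | hij
    · have hj0 : j ≠ 0 := by omega
      have hpos : 0 < j := Nat.pos_of_ne_zero hj0
      have hle : x i ≤ x ⟨j-1, by omega⟩ := hx.1 (by rw [Fin.le_def]; simp; omega)
      have h1 := abs_le.mp (hd ⟨j-1, by omega⟩)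
      have h2 : a = y ⟨j-1, by omega⟩ + η/2 := by
        rw [ha_def, if_neg hj0, nodeLo_pos' y hpos hj]
      have h3 := ht.1
      have h4 : δ ≤ t - x i := by linarith [h1.1, h1.2]
      rw [abs_of_nonneg (by linarith)]
      exact h4
    · have hjn : j ≠ n := by have := i.isLt; omega
      have hjlt : j < n := lt_of_le_of_ne hj hjn
      have hle : x ⟨j, hjlt⟩ ≤ x i := hx.1 (by rw [Fin.le_def]; simp; omega)
      have h1 := abs_le.mp (hd ⟨j, hjlt⟩)
      have h2 : b = y ⟨j, hjlt⟩ - η/2 := by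
        rw [hb_def, if_neg hjn, nodeHi_lt' y hjlt]
      have h3 := ht.2
      have h4 : δ ≤ x i - t := by linarith [h1.1, h1.2]
      rw [abs_sub_comm, abs_of_nonneg (by linarith)]
      exact h4
  -- lower bound at t0
  have hxt0 : ((m - 2 : ℝ) : EReal) ≤ SOT K J x t0 := by
    have hterm : ∀ i, ((g i - 1/(2*n) : ℝ) : EReal) ≤ K i (t0 - x i) := by
      intro i
      apply hκle i (t0 - x i) (sub_mem_unit hx ht0mem i)
      have heq : |(t0 - x i) - (t0 - y i)| = |x i - y i| := by
        rw [show (t0 - x i) - (t0 - y i) = -(x i - y i) by ring, abs_neg]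
      rw [heq]
      exact le_trans (hd i) (hδκ i)
    have hsum : ((S - 1/2 : ℝ) : EReal) ≤ ∑ i, K i (t0 - x i) := by
      have h1 : ((∑ i, (g i - 1/(2*n)) : ℝ) : EReal) ≤ ∑ i, K i (t0 - x i) := by
        rw [ereal_coe_sum]
        exact Finset.sum_le_sum (fun i _ => hterm i)
      have h2 : (∑ i, (g i - 1/(2*n)) : ℝ) = S - 1/2 := by
        rw [Finset.sum_sub_distrib, Finset.sum_const, Finset.card_univ, Fintype.card_fin,
          nsmul_eq_mul]
        have hn0 : (n:ℝ) ≠ 0 := by positivity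
        have : (n:ℝ) * (1/(2*n)) = 1/2 := by field_simp
        rw [hS_def, this]
      rwa [h2] at h1
    calc ((m - 2 : ℝ) : EReal) ≤ ((jr + (S - 1/2) : ℝ) : EReal) := by
          exact_mod_cast (by linarith : m - 2 ≤ jr + (S - 1/2))
      _ = (jr : EReal) + ((S - 1/2 : ℝ) : EReal) := EReal.coe_add _ _
      _ ≤ J t0 + ∑ i, K i (t0 - x i) := add_le_add (le_of_eq hJcoe.symm) hsum
      _ = SOT K J x t0 := rfl
  refine ⟨⟨hWsub, hWdist⟩, ?_⟩
  apply le_antisymm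
  · rw [mj]
    refine iSup₂_le fun t htI => ?_
    by_cases hW : t ∈ Icc a b
    · exact le_iSup₂ (f := fun t (_ : t ∈ Icc a b) => SOT K J x t) t hW
    · have htmem : t ∈ Icc (0:ℝ) 1 := Ij_subset_unit hx j htI
      have hsmallt : SOT K J x t ≤ ((m - 2 : ℝ) : EReal) := by
        rw [mem_Icc, not_and_or] at hW
        push_neg at hW
        rcases hW with hlt | hgt
        · have hj0 : j ≠ 0 := by
            intro h
            have h5 : nodeLo x j ≤ t := htI.1
            rw [h, nodeLo_zero'] at h5
            rw [show a = (0:ℝ) by rw [ha_def, if_pos h]] at hlt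
            linarith
          have hpos : 0 < j := Nat.pos_of_ne_zero hj0
          have hLo : nodeLo x j = x ⟨j-1, by omega⟩ := nodeLo_pos' x hpos hj
          have h1 := abs_le.mp (hd ⟨j-1, by omega⟩)
          have h2 : a = y ⟨j-1, by omega⟩ + η/2 := by
            rw [ha_def, if_neg hj0, nodeLo_pos' y hpos hj]
          have h3 : x ⟨j-1, by omega⟩ ≤ t := by rw [← hLo]; exact htI.1
          have habs : |t - x ⟨j-1, by omega⟩| ≤ η := by
            rw [abs_of_nonneg (by linarith)]
            linarith [h1.1, h1.2]
          exact hfar x hx t htmem _ habs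
        · have hjn : j ≠ n := by
            intro h
            have h5 : t ≤ nodeHi x j := htI.2
            rw [h, nodeHi_n'] at h5
            rw [show b = (1:ℝ) by rw [hb_def, if_pos h]] at hgt
            linarith
          have hjlt : j < n := lt_of_le_of_ne hj hjn
          have hHi : nodeHi x j = x ⟨j, hjlt⟩ := nodeHi_lt' x hjlt
          have h1 := abs_le.mp (hd ⟨j, hjlt⟩)
          have h2 : b = y ⟨j, hjlt⟩ - η/2 := by
            rw [hb_def, if_neg hjn, nodeHi_lt' y hjlt]
          have h3 : t ≤ x ⟨j, hjlt⟩ := by rw [← hHi]; exact htI.2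
          have habs : |t - x ⟨j, hjlt⟩| ≤ η := by
            rw [abs_sub_comm, abs_of_nonneg (by linarith)]
            linarith [h1.1, h1.2]
          exact hfar x hx t htmem _ habs
      calc SOT K J x t ≤ ((m - 2 : ℝ) : EReal) := hsmallt
        _ ≤ SOT K J x t0 := hxt0
        _ ≤ ⨆ t ∈ Icc a b, SOT K J x t :=
            le_iSup₂ (f := fun t (_ : t ∈ Icc a b) => SOT K J x t) t0 ht0ab
  · refine iSup₂_le fun t htW => ?_
    rw [mj]
    exact le_iSup₂_of_le t (hWsub htW) (le_refl _)

end
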